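/- Fix an integer k ≥ 1. For every n ≥ k+1, the coefficient of x^{n−k} in R_n^{(k≤max,∅,0,0)}(x) equals (k−1)!. -/

import Mathlib

/-- `σ i` matches `MMP(k ≤ max, ∅, 0, 0)` in `σ`: none of the earlier entries
exceeds `σ i`, and, `σ m` being the maximum of the entries after position `i`,
at least `k` of the entries in positions `i+1, …, m` exceed `σ i`. -/
def kleMatch {n : ℕ} (k : ℕ) (σ : Equiv.Perm (Fin n)) (i : Fin n) : Prop :=
  (∀ j, j < i → σ j < σ i) ∧
  ∃ m, i < m ∧ (∀ j, i < j → σ j ≤ σ m) ∧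
    k ≤ (Finset.univ.filter (fun j => i < j ∧ j ≤ m ∧ σ i < σ j)).card

instance {n : ℕ} (k : ℕ) (σ : Equiv.Perm (Fin n)) (i : Fin n) :
    Decidable (kleMatch k σ i) := by
  unfold kleMatch; infer_instance

/-- `mmp^{(k ≤ max, ∅, 0, 0)}(σ)`. -/
def mmpKle {n : ℕ} (k : ℕ) (σ : Equiv.Perm (Fin n)) : ℕ :=
  (Finset.univ.filter (fun i => kleMatch k σ i)).card

/-- `R_n^{(k ≤ max, ∅, 0, 0)}(x) = Σ_{σ ∈ S_n} x^{mmp^{(k ≤ max,∅,0,0)}(σ)}`. -/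
noncomputable def RKle (k n : ℕ) : Polynomial ℤ :=
  ∑ σ : Equiv.Perm (Fin n), Polynomial.X ^ mmpKle k σ


open Finset Equiv Polynomial

lemma cardFilterVal (n : ℕ) (p : ℕ → Prop) [DecidablePred p] :
    (Finset.univ.filter (fun i : Fin n => p i.val)).card
      = ((Finset.range n).filter p).card := by
  apply Finset.card_nbij (fun i => i.val)
  · intro a ha
    simp only [Finset.coe_filter, Finset.mem_coe, Finset.mem_filter, Finset.mem_range, Set.mem_setOf_eq, Finset.mem_univ, true_and] at *
    exact ⟨a.isLt, ha⟩
  · intro a _ b _ h; exact Fin.val_injective h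
  · intro b hb
    simp only [Finset.coe_filter, Finset.mem_range, Set.mem_setOf_eq] at hb
    exact ⟨⟨b, hb.1⟩, by simp [hb.2], rfl⟩

lemma cardIcoFin (n a b : ℕ) (hb : b ≤ n) :
    (Finset.univ.filter (fun i : Fin n => a ≤ i.val ∧ i.val < b)).card = b - a := by
  rw [cardFilterVal n (fun x => a ≤ x ∧ x < b)]
  have : (Finset.range n).filter (fun x => a ≤ x ∧ x < b) = Finset.Ico a b := by
    ext x; simp only [Finset.mem_filter, Finset.mem_range, Finset.mem_Ico]; omega
  rw [this, Nat.card_Ico]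


lemma cardLtFin {n : ℕ} (t : Fin n) :
    (Finset.univ.filter (fun i : Fin n => i < t)).card = t.val := by
  simp only [Fin.lt_def]
  rw [cardFilterVal n (fun x => x < t.val)]
  have : (Finset.range n).filter (fun x => x < t.val) = Finset.range t.val := by
    ext x
    simp only [Finset.mem_filter, Finset.mem_range]
    have := t.isLt; omega
  rw [this, Finset.card_range]

lemma fixOfMono {n : ℕ} (σ : Equiv.Perm (Fin n)) (i : Fin n)
    (h1 : ∀ j, j < i → σ j < σ i) (h2 : ∀ j, i < j → σ i < σ j) : σ i = i := by
  have key : Finset.univ.filter (fun j => σ j < σ i) = Finset.univ.filter (fun j => j < i) := by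
    ext j
    simp only [Finset.mem_filter, Finset.mem_univ, true_and]
    constructor
    · intro h
      rcases lt_trichotomy j i with hj | hj | hj
      · exact hj
      · subst hj; exact absurd h (lt_irrefl _)
      · exact absurd (h2 j hj) (not_lt.2 h.le)
    · exact h1 j
  have c1 : (Finset.univ.filter (fun j => σ j < σ i)).card
      = (Finset.univ.filter (fun y : Fin n => y < σ i)).card := by
    apply Finset.card_nbij (fun j => σ j)
    · intro a ha; simp only [Finset.coe_filter, Finset.mem_coe, Set.mem_setOf_eq, Finset.mem_filter, Finset.mem_univ, true_and] at *; exact ha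
    · intro a _ b _ h; exact σ.injective h
    · intro y hy
      simp only [Finset.coe_filter, Finset.mem_univ, Set.mem_setOf_eq, true_and] at hy
      exact ⟨σ.symm y, by simp [hy], by simp⟩
  have := cardLtFin (σ i)
  have := cardLtFin i
  have : (σ i).val = i.val := by rw [key] at c1; omega
  exact Fin.ext this

lemma cardGtFin {n : ℕ} (t : Fin n) :
    (Finset.univ.filter (fun j : Fin n => t < j)).card = n - t.val - 1 := by
  simp only [Fin.lt_def]
  rw [cardFilterVal n (fun x => t.val < x)]
  have : (Finset.range n).filter (fun x => t.val < x) = Finset.Ico (t.val + 1) n := by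
    ext x; simp only [Finset.mem_filter, Finset.mem_range, Finset.mem_Ico]; omega
  rw [this, Nat.card_Ico]; omega

lemma matchBound {n k : ℕ} (σ : Equiv.Perm (Fin n)) (i : Fin n)
    (h : kleMatch k σ i) : i.val + k + 1 ≤ n := by
  obtain ⟨_, m, him, _, hcard⟩ := h
  have hsub : Finset.univ.filter (fun j => i < j ∧ j ≤ m ∧ σ i < σ j)
      ⊆ Finset.univ.filter (fun j => i < j) :=
    by intro j hj
       simp only [Finset.mem_filter] at *
       tauto
  have := Finset.card_le_card hsub
  have := cardGtFin i
  have := i.isLt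
  omega


lemma cardValLt (n t : ℕ) (h : t ≤ n) :
    (Finset.univ.filter (fun i : Fin n => i.val < t)).card = t := by
  rw [cardFilterVal n (fun x => x < t)]
  have : (Finset.range n).filter (fun x => x < t) = Finset.range t := by
    ext x; simp only [Finset.mem_filter, Finset.mem_range]; omega
  rw [this, Finset.card_range]

lemma cardValGe (n t : ℕ) :
    (Finset.univ.filter (fun i : Fin n => t ≤ i.val)).card = n - t := by
  rw [cardFilterVal n (fun x => t ≤ x)]
  have : (Finset.range n).filter (fun x => t ≤ x) = Finset.Ico t n := by
    ext x; simp only [Finset.mem_filter, Finset.mem_range, Finset.mem_Ico]; omega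
  rw [this, Nat.card_Ico]

lemma charP {n k : ℕ} (hk : 1 ≤ k) (hn : k + 1 ≤ n) (σ : Equiv.Perm (Fin n)) :
    mmpKle k σ = n - k ↔
      ((∀ i : Fin n, i.val < n - k → σ i = i) ∧
        σ ⟨n - 1, by omega⟩ = ⟨n - 1, by omega⟩) := by
  have hS : (Finset.univ.filter (fun i : Fin n => i.val < n - k)).card = n - k :=
    cardValLt n (n - k) (by omega)
  constructor
  · intro h
    -- the matching set is contained in {i | i < n - k} and has full cardinality
    have hsub : Finset.univ.filter (fun i => kleMatch k σ i)
        ⊆ Finset.univ.filter (fun i : Fin n => i.val < n - k) := by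
      intro i hi
      simp only [Finset.mem_filter, Finset.mem_univ, true_and] at *
      have := matchBound σ i hi
      omega
    have heq := Finset.eq_of_subset_of_card_le hsub (by
      unfold mmpKle at h; omega)
    have hall : ∀ i : Fin n, i.val < n - k → kleMatch k σ i := by
      intro i hi
      have : i ∈ Finset.univ.filter (fun i : Fin n => i.val < n - k) := by
        simp [hi]
      rw [← heq] at this
      simpa using this
    -- analyze the top matching index
    set i0 : Fin n := ⟨n - k - 1, by omega⟩ with hi0
    obtain ⟨hlr0, m, him, hmax, hcard⟩ := hall i0 (by simp [hi0]; omega)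
    have hsub2 : Finset.univ.filter (fun j => i0 < j ∧ j ≤ m ∧ σ i0 < σ j)
        ⊆ Finset.univ.filter (fun j => i0 < j) := by
      intro j hj
      simp only [Finset.mem_filter] at *
      tauto
    have hG := cardGtFin i0
    have hi0v : (i0 : ℕ) = n - k - 1 := rfl
    have heq2 := Finset.eq_of_subset_of_card_le hsub2 (by omega)
    have hTG : ∀ j : Fin n, i0 < j → (j ≤ m ∧ σ i0 < σ j) := by
      intro j hj
      have : j ∈ Finset.univ.filter (fun j => i0 < j) := by simp [hj]
      rw [← heq2] at this
      simp only [Finset.mem_filter, Finset.mem_univ, true_and] at this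
      tauto
    have F2 : ∀ j : Fin n, i0 < j → σ i0 < σ j := fun j hj => (hTG j hj).2
    set lastF : Fin n := ⟨n - 1, by omega⟩ with hlastF
    have hm : m = lastF := by
      have h1 : lastF ≤ m := (hTG lastF (by
        simp only [Fin.lt_def, hi0, hlastF]; omega)).1
      have h2 : m ≤ lastF := by
        simp only [Fin.le_def, hlastF]
        have := m.isLt; omega
      exact le_antisymm h2 h1
    have hσle : ∀ x : Fin n, σ x ≤ σ m := by
      intro x
      rcases lt_trichotomy x i0 with hx | hx | hx
      · exact le_of_lt (lt_trans (hlr0 x hx) (F2 m him))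
      · subst hx; exact le_of_lt (F2 m him)
      · exact hmax x hx
    have hσm : σ m = lastF := by
      have h1 := hσle (σ.symm lastF)
      rw [Equiv.apply_symm_apply] at h1
      have h2 : σ m ≤ lastF := by
        simp only [Fin.le_def, hlastF]
        have := (σ m).isLt; omega
      exact le_antisymm h2 h1
    refine ⟨?_, hm ▸ hσm⟩
    intro i hi
    apply fixOfMono σ i (hall i hi).1
    intro j hj
    by_cases hjk : j.val < n - k
    · exact (hall j hjk).1 i hj
    · have hij0 : i0 < j := by simp only [Fin.lt_def, hi0]; omega
      rcases lt_trichotomy i i0 with hii | hii | hii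
      · exact lt_trans (hlr0 i hii) (F2 j hij0)
      · subst hii; exact F2 j hij0
      · exfalso
        simp only [Fin.lt_def, hi0] at hii
        omega
  · rintro ⟨hfix, hlast⟩
    unfold mmpKle
    have : Finset.univ.filter (fun i => kleMatch k σ i)
        = Finset.univ.filter (fun i : Fin n => i.val < n - k) := by
      ext i
      simp only [Finset.mem_filter, Finset.mem_univ, true_and]
      constructor
      · intro h
        have := matchBound σ i h
        omega
      · intro hi
        constructor
        · intro j hj
          rw [hfix i hi, hfix j (by simp only [Fin.lt_def] at hj; omega)]
          exact hj
        · refine ⟨⟨n - 1, by omega⟩, by simp only [Fin.lt_def]; omega, ?_, ?_⟩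
          · intro j _
            rw [hlast]
            simp only [Fin.le_def]
            have := (σ j).isLt; omega
          · have hsub3 : Finset.univ.filter (fun j : Fin n => n - k ≤ j.val)
                ⊆ Finset.univ.filter
                  (fun j => i < j ∧ j ≤ ⟨n - 1, by omega⟩ ∧ σ i < σ j) := by
              intro j hj
              simp only [Finset.mem_filter, Finset.mem_univ, true_and] at *
              have hσj : n - k ≤ (σ j).val := by
                by_contra hc
                push_neg at hc
                have := hfix (σ j) hc
                have := σ.injective this
                omega
              refine ⟨by simp only [Fin.lt_def]; omega,
                by simp only [Fin.le_def]; have := j.isLt; omega, ?_⟩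
              rw [hfix i hi]
              simp only [Fin.lt_def]
              omega
            have := Finset.card_le_card hsub3
            have := cardValGe n (n - k)
            omega
    rw [this, hS]

theorem stmt_10 (k : ℕ) (hk : 1 ≤ k) (n : ℕ) (hn : k + 1 ≤ n) :
    (RKle k n).coeff (n - k) = ((Nat.factorial (k - 1) : ℕ) : ℤ) := by
  classical
  unfold RKle
  rw [Polynomial.finset_sum_coeff]
  simp only [Polynomial.coeff_X_pow]
  rw [Finset.sum_boole]
  norm_cast
  have hchar : (Finset.univ.filter (fun σ : Equiv.Perm (Fin n) => n - k = mmpKle k σ))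
      = Finset.univ.filter (fun σ : Equiv.Perm (Fin n) =>
          ∀ a : Fin n, ¬(n - k ≤ a.val ∧ a.val < n - 1) → σ a = a) := by
    ext σ
    simp only [Finset.mem_filter, Finset.mem_univ, true_and]
    rw [eq_comm, charP hk hn σ]
    constructor
    · rintro ⟨h1, h2⟩ a ha
      by_cases hav : a.val < n - k
      · exact h1 a hav
      · have : a = ⟨n - 1, by omega⟩ := by
          apply Fin.ext
          have := a.isLt
          simp only at ha ⊢
          omega
        rw [this]; exact h2
    · intro h
      refine ⟨fun i hi => h i (by omega), h _ (show ¬(n - k ≤ n - 1 ∧ n - 1 < n - 1) by omega)⟩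
  rw [hchar]
  rw [← Fintype.card_subtype]
  have e := (Equiv.Perm.subtypeEquivSubtypePerm
    (fun a : Fin n => n - k ≤ a.val ∧ a.val < n - 1)).symm
  rw [Fintype.card_congr e, Fintype.card_perm, Fintype.card_subtype,
    cardIcoFin n (n - k) (n - 1) (by omega)]
  congr 1
  omega
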